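/- Let p be a prime, n ≥ 2, e ≥ 1, and let A be an n×n subring matrix with det(A) = p^e. Then every vector x = (x_1,…,x_n) in the ℤ-span of the columns of A satisfies x_1 ≡ x_2 ≡ ⋯ ≡ x_n (mod p) if and only if every entry of the first n−1 columns of A is divisible by p and the last column of A equals (1,…,1)^T. -/

import Mathlib

open scoped BigOperators

/-- The number of subrings with identity of `ℤ^n` (componentwise operations)
of additive index `k`. -/
noncomputable def numSubrings (n k : ℕ) : ℕ :=
  Nat.card {S : Subring (Fin n → ℤ) // S.toAddSubgroup.index = k}

/-- The number of irreducible subrings of `ℤ^n` of index `p ^ e`: subrings of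
additive index `p ^ e` all of whose elements have all coordinates congruent
modulo `p`. -/
noncomputable def numIrrSubrings (n p e : ℕ) : ℕ :=
  Nat.card {S : Subring (Fin n → ℤ) //
    S.toAddSubgroup.index = p ^ e ∧
    ∀ x ∈ S, ∀ i j : Fin n, (p : ℤ) ∣ x i - x j}

/-- An integer matrix is in Hermite normal form if it is upper triangular and
`0 ≤ a i j < a i i` for `i < j`. -/
def IsHermiteNormalForm {n : ℕ} (A : Matrix (Fin n) (Fin n) ℤ) : Prop :=
  (∀ i j : Fin n, j < i → A i j = 0) ∧
  ∀ i j : Fin n, i < j → 0 ≤ A i j ∧ A i j < A i i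

/-- A subring matrix is a matrix in Hermite normal form such that the all-ones
vector lies in the ℤ-span of its columns and the componentwise product of any
two columns lies in the ℤ-span of its columns. -/
def IsSubringMatrix {n : ℕ} (A : Matrix (Fin n) (Fin n) ℤ) : Prop :=
  IsHermiteNormalForm A ∧
  (1 : Fin n → ℤ) ∈ Set.range A.mulVec ∧
  ∀ j k : Fin n, (fun i => A i j * A i k) ∈ Set.range A.mulVec

/-- For a composition `α` of length `m`, the number of `(m+1) × (m+1)` subring
matrices with diagonal `(p ^ α 0, …, p ^ α (m-1), 1)`, all entries of the first
`m` columns divisible by `p`, and last column `(1,…,1)ᵀ`. -/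
noncomputable def gComp (p : ℕ) {m : ℕ} (α : Fin m → ℕ) : ℕ :=
  Nat.card {A : Matrix (Fin (m + 1)) (Fin (m + 1)) ℤ //
    IsSubringMatrix A ∧
    (∀ i : Fin m, A i.castSucc i.castSucc = (p : ℤ) ^ α i) ∧
    (∀ i : Fin (m + 1), ∀ j : Fin m, (p : ℤ) ∣ A i j.castSucc) ∧
    ∀ i : Fin (m + 1), A i (Fin.last m) = 1}

private lemma backsub {n : ℕ} (A : Matrix (Fin n) (Fin n) ℤ)
    (htri : ∀ i j : Fin n, j < i → A i j = 0)
    (hdiag : ∀ i, A i i ≠ 0) (t : Fin n → ℤ) (i : ℕ)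
    (h0 : ∀ k : Fin n, i < (k : ℕ) → A.mulVec t k = 0) :
    ∀ k : Fin n, i < (k : ℕ) → t k = 0 := by
  suffices H : ∀ d : ℕ, ∀ k : Fin n, n - (k : ℕ) ≤ d → i < (k : ℕ) → t k = 0 by
    intro k hk; exact H n k (by omega) hk
  intro d
  induction d with
  | zero => intro k hk hik; exact absurd k.isLt (by omega)
  | succ d ih =>
    intro k hk hik
    have hsum : A.mulVec t k = 0 := h0 k hik
    rw [Matrix.mulVec, dotProduct] at hsum
    have heq : ∑ j, A k j * t j = A k k * t k := by
      apply Finset.sum_eq_single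
      · intro j _ hj
        rcases lt_or_gt_of_ne hj with h | h
        · rw [htri k j h]; ring
        · rw [ih j (by omega) (by omega)]; ring
      · intro h; exact absurd (Finset.mem_univ k) h
    rw [heq] at hsum
    exact (mul_eq_zero.1 hsum).resolve_left (hdiag k)

theorem irreducible_subring_matrix_iff (p n e : ℕ) (hp : p.Prime) (hn : 2 ≤ n)
    (he : 1 ≤ e) (A : Matrix (Fin n) (Fin n) ℤ) (hA : IsSubringMatrix A)
    (hdet : A.det = (p : ℤ) ^ e) :
    (∀ x ∈ Set.range A.mulVec, ∀ i j : Fin n, (p : ℤ) ∣ x i - x j) ↔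
      ∀ i j : Fin n,
        ((j : ℕ) < n - 1 → (p : ℤ) ∣ A i j) ∧ ((j : ℕ) = n - 1 → A i j = 1) := by
  obtain ⟨⟨htri, hhnf⟩, ⟨w, hw⟩, hmul⟩ := hA
  have hppos : (1 : ℤ) < (p : ℤ) := by exact_mod_cast hp.one_lt
  set L : Fin n := ⟨n - 1, by omega⟩ with hLdef
  have hLval : (L : ℕ) = n - 1 := rfl
  have hdprod : ∏ i, A i i = (p : ℤ) ^ e := by
    rw [← hdet]; exact (Matrix.det_of_upperTriangular (fun i j h => htri i j h)).symm
  -- positivity of diagonal entries except possibly L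
  have hpos' : ∀ i : Fin n, i ≠ L → 0 < A i i := by
    intro i hi
    have hiL : i < L := by
      have := i.isLt; rw [Fin.lt_def, hLval]
      rcases lt_or_eq_of_le (Nat.le_sub_one_of_lt i.isLt) with h | h
      · exact h
      · exact absurd (Fin.ext h : i = L) hi
    have := hhnf i L hiL
    omega
  have hALL : A L L = 1 := by
    have h1 : A.mulVec w L = 1 := by rw [hw]; rfl
    rw [Matrix.mulVec, dotProduct] at h1
    have heq : ∑ j, A L j * w j = A L L * w L := by
      apply Finset.sum_eq_single
      · intro j _ hj
        have hjL : j < L := by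
          rw [Fin.lt_def, hLval]
          rcases lt_or_eq_of_le (Nat.le_sub_one_of_lt j.isLt) with h | h
          · exact h
          · exact absurd (Fin.ext h : j = L) hj
        rw [htri L j hjL]; ring
      · intro h; exact absurd (Finset.mem_univ L) h
    rw [heq] at h1
    -- A L L is a unit
    have hu : A L L = 1 ∨ A L L = -1 := Int.isUnit_iff.1 (IsUnit.of_mul_eq_one _ h1)
    rcases hu with h | h
    · exact h
    · exfalso
      have hrest : 0 < ∏ i ∈ Finset.univ.erase L, A i i :=
        Finset.prod_pos fun i hi => hpos' i (Finset.ne_of_mem_erase hi)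
      have h2 : A L L * ∏ i ∈ Finset.univ.erase L, A i i = (p : ℤ) ^ e := by
        rw [← hdprod]
        exact Finset.mul_prod_erase Finset.univ (fun i => A i i) (Finset.mem_univ L)
      rw [h] at h2
      have hpe : (0 : ℤ) < (p : ℤ) ^ e := by positivity
      nlinarith
  have hpos : ∀ i : Fin n, 0 < A i i := by
    intro i
    by_cases hi : i = L
    · rw [hi, hALL]; norm_num
    · exact hpos' i hi
  constructor
  · -- forward direction
    intro h
    -- p divides entries of columns before L
    have hcol : ∀ i j : Fin n, (j : ℕ) < n - 1 → (p : ℤ) ∣ A i j := by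
      intro i j hj
      have hmem : (fun k => A k j) ∈ Set.range A.mulVec :=
        ⟨Pi.single j 1, by rw [Matrix.mulVec_single]; simp; rfl⟩
      have := h _ hmem i L
      have hLj : A L j = 0 := htri L j (by rw [Fin.lt_def, hLval]; exact hj)
      simpa [hLj] using this
    -- p divides c i - 1 for column L
    have hcolL : ∀ i : Fin n, (p : ℤ) ∣ A i L - 1 := by
      intro i
      have hmem : (fun k => A k L) ∈ Set.range A.mulVec :=
        ⟨Pi.single L 1, by rw [Matrix.mulVec_single]; simp; rfl⟩
      have := h _ hmem i L
      rwa [hALL] at this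
    -- last column is all ones, by downward induction
    have hlast : ∀ d : ℕ, ∀ i : Fin n, n - 1 - (i : ℕ) ≤ d → A i L = 1 := by
      intro d
      induction d with
      | zero =>
        intro i hi
        have : i = L := Fin.ext (by have := i.isLt; omega)
        rw [this, hALL]
      | succ d ih =>
        intro i hi
        by_cases hiL : i = L
        · rw [hiL, hALL]
        · have hiLlt : (i : ℕ) < n - 1 := by
            have := i.isLt
            rcases lt_or_eq_of_le (Nat.le_sub_one_of_lt i.isLt) with h' | h'
            · exact h'
            · exact absurd (Fin.ext h' : i = L) hiL
          obtain ⟨v1, hv1⟩ := hmul L L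
          set t : Fin n → ℤ := v1 - Pi.single L 1 with ht
          have hmv : A.mulVec t = fun k => A k L * A k L - A k L := by
            rw [ht, Matrix.mulVec_sub, hv1, Matrix.mulVec_single]
            funext k; simp
          have h0 : ∀ k : Fin n, (i : ℕ) < (k : ℕ) → A.mulVec t k = 0 := by
            intro k hk
            have hkL : A k L = 1 := ih k (by omega)
            rw [hmv]; simp [hkL]
          have ht0 : ∀ k : Fin n, (i : ℕ) < (k : ℕ) → t k = 0 :=
            backsub A htri (fun k => (hpos k).ne') t (i : ℕ) h0
          have hwi : A.mulVec t i = A i i * t i := by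
            rw [Matrix.mulVec, dotProduct]
            apply Finset.sum_eq_single
            · intro j _ hj
              rcases lt_or_gt_of_ne hj with h' | h'
              · rw [htri i j h']; ring
              · rw [ht0 j (by exact_mod_cast h')]; ring
            · intro h'; exact absurd (Finset.mem_univ i) h'
          have hdvd1 : A i i ∣ A i L * (A i L - 1) := by
            refine ⟨t i, ?_⟩
            have := hwi
            rw [hmv] at this
            simp only at this
            linarith [this]
          -- p does not divide A i L
          have hnd : ¬ (p : ℤ) ∣ A i L := by
            intro hdd
            have : (p : ℤ) ∣ 1 := by
              have := dvd_sub hdd (hcolL i)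
              simpa using this
            have := Int.le_of_dvd one_pos this
            omega
          have hcop : IsCoprime (A i i) (A i L) := by
            have h1 : IsCoprime ((p : ℤ) ^ e) (A i L) :=
              IsCoprime.pow_left (((Nat.prime_iff_prime_int.mp hp).coprime_iff_not_dvd).2 hnd)
            exact h1.of_isCoprime_of_dvd_left
              (hdprod ▸ Finset.dvd_prod_of_mem (fun i => A i i) (Finset.mem_univ i))
          have hdvd2 : A i i ∣ A i L - 1 := hcop.dvd_of_dvd_mul_left hdvd1
          have hb := hhnf i L (by rw [Fin.lt_def, hLval]; exact hiLlt)
          -- A i L ≠ 0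
          have hne0 : A i L ≠ 0 := by
            intro h0'
            have : (p : ℤ) ∣ -1 := by simpa [h0'] using hcolL i
            have := Int.le_of_dvd one_pos (dvd_neg.1 this)
            omega
          have : A i L - 1 = 0 :=
            Int.eq_zero_of_abs_lt_dvd hdvd2 (by rw [abs_of_nonneg (by omega)]; omega)
          omega
    intro i j
    refine ⟨hcol i j, fun hj => ?_⟩
    have : j = L := Fin.ext hj
    rw [this]
    exact hlast n i (by omega)
  · -- reverse direction
    rintro H x ⟨v, rfl⟩ i j
    have heq : A.mulVec v i - A.mulVec v j = ∑ k, (A i k - A j k) * v k := by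
      rw [Matrix.mulVec, Matrix.mulVec, dotProduct, dotProduct,
        ← Finset.sum_sub_distrib]
      congr 1; funext k; ring
    rw [heq]
    apply Finset.dvd_sum
    intro k _
    rcases lt_or_eq_of_le (Nat.le_sub_one_of_lt k.isLt) with hk | hk
    · exact Dvd.dvd.mul_right (dvd_sub ((H i k).1 hk) ((H j k).1 hk)) _
    · rw [(H i k).2 hk, (H j k).2 hk]; simp
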